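/- Let M ≥ 1 be an integer and let B_1, …, B_M be {0,1}-valued random variables on a common probability space (not assumed independent). Let a ∈ [0,1] and let (b_k)_{k≥1} be numbers in [0,1] such that P[B_1 = 1] ≤ a and, for every integer i ≥ 2, P[B_i = 1] ≤ b_{⌊log₂ i⌋}. Let W = Σ_{i=1}^M B_i. Then: (i) P[W + 𝟙{W > 0} ≥ 2] ≤ a + Σ_{k=1}^∞ 2^k·b_k; and (ii) for every integer i ≥ 3: P[W + 𝟙{W > 0} ≥ i] ≤ Σ_{k=⌊log₂(i−1)⌋}^∞ 2^k·b_k. -/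

import Mathlib

open MeasureTheory
open scoped ENNReal

/-- Tail bounds for `W + 𝟙{W > 0}` where `W = Σ_{i=1}^M B_i` is a sum of (not
necessarily independent) `{0,1}`-valued random variables with `P[B_1 = 1] ≤ a` and
`P[B_i = 1] ≤ b_{⌊log₂ i⌋}` for `2 ≤ i ≤ M`:
(i) `P[W + 𝟙{W>0} ≥ 2] ≤ a + Σ_{k≥1} 2^k b_k`;
(ii) for every `i ≥ 3`, `P[W + 𝟙{W>0} ≥ i] ≤ Σ_{k ≥ ⌊log₂(i−1)⌋} 2^k b_k`. -/
theorem tail_bound_endangered_sum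
    {Ω : Type*} [MeasurableSpace Ω] (P : Measure Ω) [IsProbabilityMeasure P]
    (M : ℕ) (hM : 1 ≤ M) (B : ℕ → Ω → ℕ)
    (hBmeas : ∀ i, Measurable (B i)) (hB01 : ∀ i ω, B i ω = 0 ∨ B i ω = 1)
    (a : ℝ) (ha : a ∈ Set.Icc (0 : ℝ) 1)
    (b : ℕ → ℝ) (hb : ∀ k, b k ∈ Set.Icc (0 : ℝ) 1)
    (hB1 : P {ω | B 1 ω = 1} ≤ ENNReal.ofReal a)
    (hBi : ∀ i, 2 ≤ i → i ≤ M →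
      P {ω | B i ω = 1} ≤ ENNReal.ofReal (b (Nat.log 2 i))) :
    (P {ω | 2 ≤ (∑ i ∈ Finset.Icc 1 M, B i ω) +
          (if 0 < ∑ i ∈ Finset.Icc 1 M, B i ω then 1 else 0)} ≤
        ENNReal.ofReal a + ∑' k : ℕ, 2 ^ (k + 1) * ENNReal.ofReal (b (k + 1))) ∧
    (∀ i : ℕ, 3 ≤ i →
      P {ω | i ≤ (∑ n ∈ Finset.Icc 1 M, B n ω) +
          (if 0 < ∑ n ∈ Finset.Icc 1 M, B n ω then 1 else 0)} ≤
        ∑' k : ℕ, if Nat.log 2 (i - 1) ≤ k then 2 ^ k * ENNReal.ofReal (b k) else 0) := by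
  classical
  set g : ℕ → ℝ≥0∞ := fun k => (2 : ℝ≥0∞) ^ k * ENNReal.ofReal (b k) with hg
  -- union bound
  have hunion : ∀ S : Finset ℕ, P {ω | ∃ j ∈ S, B j ω = 1} ≤ ∑ j ∈ S, P {ω | B j ω = 1} := by
    intro S
    have hset : {ω | ∃ j ∈ S, B j ω = 1} = ⋃ j ∈ S, {ω | B j ω = 1} := by
      ext ω; simp
    rw [hset]
    exact measure_biUnion_finset_le _ _
  -- grouping bound
  have hgroup : ∀ S : Finset ℕ, (∀ j ∈ S, 2 ≤ j) →
      ∑ j ∈ S, ENNReal.ofReal (b (Nat.log 2 j)) ≤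
        ∑ k ∈ S.image (Nat.log 2), g k := by
    intro S hS
    rw [Finset.sum_comp (fun k => ENNReal.ofReal (b k)) (Nat.log 2)]
    apply Finset.sum_le_sum
    intro k _
    have hcard : (S.filter fun j => Nat.log 2 j = k).card ≤ 2 ^ k := by
      have hsub : (S.filter fun j => Nat.log 2 j = k) ⊆ Finset.Ico (2 ^ k) (2 ^ (k + 1)) := by
        intro j hj
        simp only [Finset.mem_filter] at hj
        obtain ⟨hjS, hjk⟩ := hj
        have h2 := hS j hjS
        rw [Finset.mem_Ico]
        refine ⟨?_, ?_⟩
        · rw [← hjk]; exact Nat.pow_log_le_self 2 (by omega)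
        · rw [← hjk]; exact Nat.lt_pow_succ_log_self (by norm_num) j
      calc (S.filter fun j => Nat.log 2 j = k).card
          ≤ (Finset.Ico (2 ^ k) (2 ^ (k + 1))).card := Finset.card_le_card hsub
        _ = 2 ^ k := by rw [Nat.card_Ico, pow_succ]; omega
    rw [nsmul_eq_mul, hg]
    apply mul_le_mul_left
    calc ((S.filter fun j => Nat.log 2 j = k).card : ℝ≥0∞) ≤ ((2 ^ k : ℕ) : ℝ≥0∞) := by
          exact_mod_cast Nat.cast_le.mpr hcard
      _ = (2 : ℝ≥0∞) ^ k := by push_cast; ring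
  -- finite sums with elements ≥ K bounded by restricted tsum
  have htail : ∀ (K : ℕ) (s : Finset ℕ), (∀ k ∈ s, K ≤ k) →
      ∑ k ∈ s, g k ≤ ∑' k : ℕ, if K ≤ k then g k else 0 := by
    intro K s hs
    calc ∑ k ∈ s, g k = ∑ k ∈ s, (if K ≤ k then g k else 0) := by
          refine Finset.sum_congr rfl fun k hk => ?_
          rw [if_pos (hs k hk)]
      _ ≤ _ := ENNReal.sum_le_tsum s
  -- shifted tsum bound
  have hshift : ∀ s : Finset ℕ, (∀ k ∈ s, 1 ≤ k) →
      ∑ k ∈ s, g k ≤ ∑' m : ℕ, g (m + 1) := by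
    intro s hs
    have hinj : Set.InjOn (· - 1) s := by
      intro x hx y hy hxy
      have := hs x hx; have := hs y hy
      simp only at hxy; omega
    have : ∑ m ∈ s.image (· - 1), g (m + 1) = ∑ k ∈ s, g k := by
      rw [Finset.sum_image (fun x hx y hy => hinj hx hy)]
      refine Finset.sum_congr rfl fun k hk => ?_
      have := hs k hk
      congr 1
      omega
    rw [← this]
    exact ENNReal.sum_le_tsum _
  -- W as a card
  have hWcard : ∀ ω, (∑ j ∈ Finset.Icc 1 M, B j ω) =
      ((Finset.Icc 1 M).filter fun j => B j ω = 1).card := by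
    intro ω
    rw [Finset.card_filter]
    refine Finset.sum_congr rfl fun j _ => ?_
    rcases hB01 j ω with h | h <;> simp [h]
  constructor
  · -- part (i)
    have hincl : {ω | 2 ≤ (∑ i ∈ Finset.Icc 1 M, B i ω) +
          (if 0 < ∑ i ∈ Finset.Icc 1 M, B i ω then 1 else 0)} ⊆
        {ω | ∃ j ∈ Finset.Icc 1 M, B j ω = 1} := by
      intro ω hω
      simp only [Set.mem_setOf_eq] at hω ⊢
      have hW : (∑ i ∈ Finset.Icc 1 M, B i ω) ≠ 0 := by
        intro h0
        rw [h0] at hω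
        simp at hω
      obtain ⟨j, hjmem, hjne⟩ := Finset.exists_ne_zero_of_sum_ne_zero hW
      exact ⟨j, hjmem, (hB01 j ω).resolve_left hjne⟩
    have hsplit : Finset.Icc 1 M = insert 1 (Finset.Icc 2 M) := by
      ext x; simp [Finset.mem_Icc, Finset.mem_insert]; omega
    calc P _ ≤ P {ω | ∃ j ∈ Finset.Icc 1 M, B j ω = 1} := measure_mono hincl
      _ ≤ ∑ j ∈ Finset.Icc 1 M, P {ω | B j ω = 1} := hunion _
      _ = P {ω | B 1 ω = 1} + ∑ j ∈ Finset.Icc 2 M, P {ω | B j ω = 1} := by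
          rw [hsplit, Finset.sum_insert (by simp)]
      _ ≤ ENNReal.ofReal a + ∑ j ∈ Finset.Icc 2 M, ENNReal.ofReal (b (Nat.log 2 j)) := by
          refine add_le_add hB1 (Finset.sum_le_sum fun j hj => ?_)
          rw [Finset.mem_Icc] at hj
          exact hBi j hj.1 hj.2
      _ ≤ ENNReal.ofReal a + ∑ k ∈ (Finset.Icc 2 M).image (Nat.log 2), g k := by
          refine add_le_add_right (hgroup _ fun j hj => ?_) _
          rw [Finset.mem_Icc] at hj; exact hj.1
      _ ≤ ENNReal.ofReal a + ∑' m : ℕ, g (m + 1) := by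
          refine add_le_add_right (hshift _ fun k hk => ?_) _
          obtain ⟨j, hj, rfl⟩ := Finset.mem_image.mp hk
          rw [Finset.mem_Icc] at hj
          exact Nat.le_log_of_pow_le (by norm_num) (by simpa using hj.1)
      _ = ENNReal.ofReal a + ∑' k : ℕ, 2 ^ (k + 1) * ENNReal.ofReal (b (k + 1)) := rfl
  · -- part (ii)
    intro i hi
    have hincl : {ω | i ≤ (∑ n ∈ Finset.Icc 1 M, B n ω) +
          (if 0 < ∑ n ∈ Finset.Icc 1 M, B n ω then 1 else 0)} ⊆
        {ω | ∃ j ∈ Finset.Icc (i - 1) M, B j ω = 1} := by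
      intro ω hω
      simp only [Set.mem_setOf_eq] at hω ⊢
      have hite : (if 0 < ∑ n ∈ Finset.Icc 1 M, B n ω then 1 else 0) ≤ 1 := by
        split <;> omega
      have hWge : i - 1 ≤ ∑ n ∈ Finset.Icc 1 M, B n ω := by omega
      rw [hWcard ω] at hWge
      by_contra hall
      push_neg at hall
      have hsub : ((Finset.Icc 1 M).filter fun j => B j ω = 1) ⊆ Finset.Ico 1 (i - 1) := by
        intro j hj
        simp only [Finset.mem_filter, Finset.mem_Icc] at hj
        rw [Finset.mem_Ico]
        refine ⟨hj.1.1, ?_⟩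
        by_contra hge
        exact hall j (Finset.mem_Icc.mpr ⟨by omega, hj.1.2⟩) hj.2
      have := Finset.card_le_card hsub
      rw [Nat.card_Ico] at this
      omega
    calc P _ ≤ P {ω | ∃ j ∈ Finset.Icc (i - 1) M, B j ω = 1} := measure_mono hincl
      _ ≤ ∑ j ∈ Finset.Icc (i - 1) M, P {ω | B j ω = 1} := hunion _
      _ ≤ ∑ j ∈ Finset.Icc (i - 1) M, ENNReal.ofReal (b (Nat.log 2 j)) := by
          refine Finset.sum_le_sum fun j hj => ?_
          rw [Finset.mem_Icc] at hj
          exact hBi j (by omega) hj.2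
      _ ≤ ∑ k ∈ (Finset.Icc (i - 1) M).image (Nat.log 2), g k := by
          refine hgroup _ fun j hj => ?_
          rw [Finset.mem_Icc] at hj; omega
      _ ≤ ∑' k : ℕ, if Nat.log 2 (i - 1) ≤ k then g k else 0 := by
          refine htail _ _ fun k hk => ?_
          obtain ⟨j, hj, rfl⟩ := Finset.mem_image.mp hk
          rw [Finset.mem_Icc] at hj
          exact Nat.log_mono_right hj.1
      _ = ∑' k : ℕ, if Nat.log 2 (i - 1) ≤ k then 2 ^ k * ENNReal.ofReal (b k) else 0 := rfl
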